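/- (k-expert activation, necessity) Let u ∈ ℝ^E with E ≥ 2, let 1 ≤ k ≤ E − 1, and let λ < 1. If the Sparsegen routing output p* = sparsegen(u, λ) satisfies p*_{σ(i)} > 0 for all i ≤ k and p*_{σ(i)} = 0 for all i > k, then 1 − (U_k − k·u_(k+1)) ≤ λ < 1 − (U_k − k·u_(k)). -/

import Mathlib

noncomputable section

/-- The probability simplex in `ℝ^E`. -/
def simplex (E : ℕ) : Set (EuclideanSpace ℝ (Fin E)) :=
  {p | (∀ i, 0 ≤ p i) ∧ ∑ i, p i = 1}

/-- The Sparsegen objective `g_{u,λ}(p) = ‖p − u‖₂² − λ‖p‖₂²`. -/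
def sparsegenObj {E : ℕ} (u : EuclideanSpace ℝ (Fin E)) (lam : ℝ)
    (p : EuclideanSpace ℝ (Fin E)) : ℝ :=
  ‖p - u‖ ^ 2 - lam * ‖p‖ ^ 2


lemma norm_sq_eucl {E : ℕ} (x : EuclideanSpace ℝ (Fin E)) : ‖x‖^2 = ∑ i, x i ^ 2 := by
  rw [EuclideanSpace.norm_eq, Real.sq_sqrt (by positivity)]
  simp [sq_abs]

lemma obj_eq {E : ℕ} (u : EuclideanSpace ℝ (Fin E)) (lam : ℝ)
    (p : EuclideanSpace ℝ (Fin E)) :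
    sparsegenObj u lam p = ∑ i, ((p i - u i) ^ 2 - lam * p i ^ 2) := by
  unfold sparsegenObj
  rw [norm_sq_eucl, norm_sq_eucl, Finset.mul_sum, ← Finset.sum_sub_distrib]
  exact Finset.sum_congr rfl fun i _ => by simp [PiLp.sub_apply]


lemma exchange {E : ℕ} {u : EuclideanSpace ℝ (Fin E)} {lam : ℝ} (hlam : lam < 1)
    {p : EuclideanSpace ℝ (Fin E)} (hp : p ∈ simplex E)
    (hmin : IsMinOn (sparsegenObj u lam) (simplex E) p)
    (a b : Fin E) (hpa : 0 < p a) :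
    u b - (1 - lam) * p b ≤ u a - (1 - lam) * p a := by
  rcases eq_or_ne a b with rfl | hab
  · exact le_rfl
  set s : ℝ := 1 - lam with hs_def
  have hs : 0 < s := by linarith
  by_contra hcon
  push_neg at hcon
  set δ : ℝ := (u b - s * p b) - (u a - s * p a) with hδ_def
  have hδ : 0 < δ := by simp [hδ_def]; linarith
  set t : ℝ := min (p a) (δ / (2 * s)) with ht_def
  have ht : 0 < t := lt_min hpa (by positivity)
  have htpa : t ≤ p a := min_le_left _ _
  have hts : s * t ≤ δ / 2 := by
    have : t ≤ δ / (2 * s) := min_le_right _ _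
    calc s * t ≤ s * (δ / (2 * s)) := by nlinarith
    _ = δ / 2 := by field_simp
  set q : EuclideanSpace ℝ (Fin E) :=
    WithLp.toLp 2 (fun i => p i + (if i = b then t else 0) - (if i = a then t else 0)) with hq_def
  have hqa : q a = p a - t := by simp [hq_def, hab]
  have hqb : q b = p b + t := by simp [hq_def, hab.symm]
  have hqo : ∀ i, i ≠ a ∧ i ≠ b → q i = p i := by
    intro i ⟨h1, h2⟩; simp [hq_def, h1, h2]
  have hq : q ∈ simplex E := by
    constructor
    · intro i
      rcases eq_or_ne i a with rfl | h1
      · rw [hqa]; linarith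
      rcases eq_or_ne i b with rfl | h2
      · rw [hqb]; have := hp.1 i; linarith
      · rw [hqo i ⟨h1, h2⟩]; exact hp.1 i
    · have : ∑ i, q i = ∑ i, (p i + (if i = b then t else 0) - (if i = a then t else 0)) := rfl
      rw [this]
      rw [Finset.sum_sub_distrib, Finset.sum_add_distrib]
      simp [hp.2]
  have hΔ : sparsegenObj u lam p ≤ sparsegenObj u lam q := hmin hq
  rw [obj_eq, obj_eq] at hΔ
  -- difference
  have hdiff : ∑ i, ((q i - u i) ^ 2 - lam * q i ^ 2)
      - ∑ i, ((p i - u i) ^ 2 - lam * p i ^ 2)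
      = 2 * t * ((s * p b - u b) - (s * p a - u a) + s * t) := by
    rw [← Finset.sum_sub_distrib]
    rw [Fintype.sum_eq_add a b hab (fun x hx => by rw [hqo x hx]; ring)]
    rw [hqa, hqb]; ring
  have : 0 ≤ 2 * t * ((s * p b - u b) - (s * p a - u a) + s * t) := by
    rw [← hdiff]; linarith
  have h2 : 0 ≤ (s * p b - u b) - (s * p a - u a) + s * t := by nlinarith
  have : (s * p b - u b) - (s * p a - u a) = -δ := by rw [hδ_def]; ring
  rw [this] at h2
  clear_value q t δ s
  linarith

lemma main_aux (E : ℕ) (u : EuclideanSpace ℝ (Fin E)) (σ : Equiv.Perm (Fin E))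
    (k : ℕ) (hk1 : 1 ≤ k) (lam : ℝ) (hlam : lam < 1)
    (p : EuclideanSpace ℝ (Fin E)) (hp : p ∈ simplex E)
    (hmin : IsMinOn (sparsegenObj u lam) (simplex E) p)
    (hpos : ∀ i : Fin E, (i : ℕ) < k → 0 < p (σ i))
    (hzero : ∀ i : Fin E, k ≤ (i : ℕ) → p (σ i) = 0)
    (a0 b0 : Fin E) (ha0 : (a0 : ℕ) = k - 1) (hb0 : (b0 : ℕ) = k) :
    1 - ((∑ i ∈ Finset.Iic a0, u (σ i)) - k * u (σ b0)) ≤ lam ∧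
    lam < 1 - ((∑ i ∈ Finset.Iic a0, u (σ i)) - k * u (σ a0)) := by
  have hs : (0:ℝ) < 1 - lam := by linarith
  have ha0k : (a0 : ℕ) < k := by omega
  have hpa0 : 0 < p (σ a0) := hpos a0 ha0k
  have hc : ∀ i : Fin E, (i : ℕ) < k →
      u (σ i) - (1 - lam) * p (σ i) = u (σ a0) - (1 - lam) * p (σ a0) := by
    intro i hi
    exact le_antisymm (exchange hlam hp hmin (σ a0) (σ i) hpa0)
      (exchange hlam hp hmin (σ i) (σ a0) (hpos i hi))
  have hmem : ∀ i : Fin E, i ∈ Finset.Iic a0 ↔ (i : ℕ) < k := by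
    intro i
    rw [Finset.mem_Iic, Fin.le_def, ha0]
    omega
  have hsum1 : ∑ i ∈ Finset.Iic a0, p (σ i) = 1 := by
    rw [Finset.sum_subset (Finset.subset_univ _)
      (fun x _ hx => hzero x (by have := (hmem x).not.1 hx; omega))]
    rw [Equiv.sum_comp σ (fun j => p j)]
    exact hp.2
  have hcard : (Finset.Iic a0).card = k := by
    rw [Fin.card_Iic, ha0]; omega
  have hsum2 : ∑ i ∈ Finset.Iic a0, (u (σ i) - (1 - lam) * p (σ i))
      = k * (u (σ a0) - (1 - lam) * p (σ a0)) := by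
    rw [Finset.sum_congr rfl (fun i hi => hc i ((hmem i).1 hi)),
      Finset.sum_const, hcard, nsmul_eq_mul]
  have hU : (∑ i ∈ Finset.Iic a0, u (σ i)) - (1 - lam)
      = k * (u (σ a0) - (1 - lam) * p (σ a0)) := by
    rw [← hsum2, Finset.sum_sub_distrib, ← Finset.mul_sum, hsum1, mul_one]
  have hkpos : (0:ℝ) < (k:ℝ) := by exact_mod_cast hk1
  constructor
  · -- u (σ b0) ≤ c
    have hb : u (σ b0) ≤ u (σ a0) - (1 - lam) * p (σ a0) := by
      have h := exchange hlam hp hmin (σ a0) (σ b0) hpa0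
      have hz : p (σ b0) = 0 := hzero b0 (by omega)
      rw [hz] at h; linarith
    have : (k:ℝ) * u (σ b0) ≤ (k:ℝ) * (u (σ a0) - (1 - lam) * p (σ a0)) :=
      mul_le_mul_of_nonneg_left hb hkpos.le
    rw [← hU] at this
    linarith
  · have hlt : u (σ a0) - (1 - lam) * p (σ a0) < u (σ a0) := by nlinarith
    have : (k:ℝ) * (u (σ a0) - (1 - lam) * p (σ a0)) < (k:ℝ) * u (σ a0) :=
      mul_lt_mul_of_pos_left hlt hkpos
    rw [← hU] at this
    linarith


/-- k-expert activation, necessity: let `u ∈ ℝ^E` with `E ≥ 2`, `1 ≤ k ≤ E − 1`, and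
`λ < 1`.  If the Sparsegen routing output `p*` (the unique minimizer over the
simplex) satisfies `p*_{σ(i)} > 0` for all `i ≤ k` and `p*_{σ(i)} = 0` for all
`i > k` (1-based), then `1 − (U_k − k·u_(k+1)) ≤ λ < 1 − (U_k − k·u_(k))`.
(Indices are translated to 0-based `Fin E`: paper's `u_(k)` is `u (σ ⟨k-1,_⟩)` and
`U_k = Σ_{i ≤ k-1} u (σ i)`.) -/
theorem k_expert_activation_necessity (E : ℕ) (hE : 2 ≤ E)
    (u : EuclideanSpace ℝ (Fin E)) (σ : Equiv.Perm (Fin E))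
    (hσ : Antitone fun i => u (σ i))
    (k : ℕ) (hk1 : 1 ≤ k) (hk2 : k ≤ E - 1) (lam : ℝ) (hlam : lam < 1)
    (p : EuclideanSpace ℝ (Fin E)) (hp : p ∈ simplex E)
    (hmin : IsMinOn (sparsegenObj u lam) (simplex E) p)
    (hpos : ∀ i : Fin E, (i : ℕ) < k → 0 < p (σ i))
    (hzero : ∀ i : Fin E, k ≤ (i : ℕ) → p (σ i) = 0) :
    1 - ((∑ i ∈ Finset.Iic (⟨k - 1, by omega⟩ : Fin E), u (σ i))
        - k * u (σ ⟨k, by omega⟩)) ≤ lam ∧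
    lam < 1 - ((∑ i ∈ Finset.Iic (⟨k - 1, by omega⟩ : Fin E), u (σ i))
        - k * u (σ ⟨k - 1, by omega⟩)) := by
  exact main_aux E u σ k hk1 lam hlam p hp hmin hpos hzero _ _ rfl rfl
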